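/- (Entropy-constrained optimal univariate functional distortion, eq. (26).) Let X have density f_X and g be a computation with sensitivity γ(x) = |g′(x)|, with 0 < ∫_ℝ γ(x) dx < ∞. Define λ*(x) = γ(x)/∫_ℝ γ(t) dt, and assume f_X, g, λ* satisfy (UF1′)–(UF4′). Then the compander quantizers Q_{K,λ*} satisfy lim_{K→∞} K² · E[|g(X) − g(Q_{K,λ*}(X))|²] = (1/12) (∫_ℝ γ(x) dx)². -/

import Mathlib

open MeasureTheory Filter Set
open scoped Topology

noncomputable section

/-- A compressor: a strictly increasing `C¹` bijection from `ℝ` onto `(0,1)` whose derivative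
(the point density) integrates to `1`. -/
def IsCompressor (c : ℝ → ℝ) : Prop :=
  StrictMono c ∧ ContDiff ℝ 1 c ∧ Set.range c = Set.Ioo (0 : ℝ) 1 ∧
    (∫ x : ℝ, deriv c x) = 1

/-- `p` gives the cell boundaries of the `K`-level compander quantizer for compressor `c`:
`p k = c⁻¹ (k / K)` for `1 ≤ k ≤ K - 1`. -/
def IsBoundaries (c : ℝ → ℝ) (K : ℕ) (p : ℕ → ℝ) : Prop :=
  ∀ k : ℕ, 1 ≤ k → k ≤ K - 1 → c (p k) = (k : ℝ) / (K : ℝ)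

/-- `Q` is the `K`-level compander quantizer with cell boundaries `p`: the codewords are the
midpoints of the interior cells, together with `p 1` and `p (K-1)` for the two overload cells. -/
def IsCompanderQuantizer (K : ℕ) (p : ℕ → ℝ) (Q : ℝ → ℝ) : Prop :=
  (∀ x ≤ p 1, Q x = p 1) ∧
  (∀ x, p (K - 1) < x → Q x = p (K - 1)) ∧
  (∀ k : ℕ, 2 ≤ k → k ≤ K - 1 → ∀ x ∈ Set.Ioc (p (k - 1)) (p k),
      Q x = (p (k - 1) + p k) / 2)

namespace Stmt11


variable {f g c : ℝ → ℝ} {Cu : ℝ}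

lemma integrable_of_integral_one (h : (∫ x : ℝ, f x) = 1) : Integrable f := by
  by_contra hn
  rw [MeasureTheory.integral_undef hn] at h
  norm_num at h

lemma gdiff (hg : ContDiff ℝ 2 g) : Differentiable ℝ g := hg.differentiable (by norm_num)

lemma gderiv_cont (hg : ContDiff ℝ 2 g) : Continuous (deriv g) :=
  hg.continuous_deriv (by norm_num)

lemma gderiv_diff (hg : ContDiff ℝ 2 g) : Differentiable ℝ (deriv g) := by
  have h2 : ContDiff ℝ ((1 : ℕ∞) + 1) g := by exact_mod_cast hg
  exact ((contDiff_succ_iff_deriv).mp h2).2.2.differentiable (by norm_num)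

lemma gderiv_lip (hg : ContDiff ℝ 2 g) (hg'' : ∀ x, |deriv (deriv g) x| ≤ Cu) :
    ∀ x y, |deriv g x - deriv g y| ≤ Cu * |x - y| := by
  intro x y
  have := Convex.norm_image_sub_le_of_norm_deriv_le (f := deriv g) (s := univ)
    (fun z _ => (gderiv_diff hg) z) (fun z _ => by simpa using hg'' z) convex_univ
    (mem_univ y) (mem_univ x)
  simpa [Real.norm_eq_abs] using this

lemma ftc_g (hg : ContDiff ℝ 2 g) (u v : ℝ) : g v - g u = ∫ t in u..v, deriv g t :=
  (intervalIntegral.integral_deriv_eq_sub' g rfl (fun x _ => (gdiff hg) x)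
    ((gderiv_cont hg).continuousOn)).symm

lemma cdiff (hcc : ContDiff ℝ 1 c) : Differentiable ℝ c := hcc.differentiable (by norm_num)

lemma cderiv_cont (hcc : ContDiff ℝ 1 c) : Continuous (deriv c) :=
  hcc.continuous_deriv le_rfl

lemma ftc_c (hcc : ContDiff ℝ 1 c) (u v : ℝ) : c v - c u = ∫ t in u..v, deriv c t :=
  (intervalIntegral.integral_deriv_eq_sub' c rfl (fun x _ => (cdiff hcc) x)
    ((cderiv_cont hcc).continuousOn)).symm

lemma sign_const (hg : ContDiff ℝ 2 g) (hne : ∀ x, deriv g x ≠ 0) :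
    (∀ x, deriv g x = |deriv g x|) ∨ (∀ x, deriv g x = -|deriv g x|) := by
  have key : ∀ x y, 0 < deriv g x → deriv g y < 0 → False := by
    intro x y hx hy
    have hc : ContinuousOn (deriv g) (uIcc x y) := (gderiv_cont hg).continuousOn
    have h0 : (0:ℝ) ∈ uIcc (deriv g x) (deriv g y) := by
      rw [Set.mem_uIcc]; right; exact ⟨hy.le, hx.le⟩
    obtain ⟨z, _, hz⟩ := intermediate_value_uIcc hc h0
    exact hne z hz
  rcases lt_or_gt_of_ne (hne 0) with h0 | h0
  · right; intro x
    rcases lt_or_gt_of_ne (hne x) with hx | hx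
    · rw [abs_of_neg hx]; ring
    · exact absurd (key x 0 hx h0) (by simp)
  · left; intro x
    rcases lt_or_gt_of_ne (hne x) with hx | hx
    · exact absurd (key 0 x h0 hx) (by simp)
    · rw [abs_of_pos hx]

lemma not_integrableOn_left (a b c₀ : ℝ) (hab : a < b) (hc₀ : 0 < c₀) (h : ℝ → ℝ)
    (hint : IntegrableOn h (Ioo a b))
    (hbnd : ∀ x ∈ Ioo a b, c₀ * (x - a) ^ (-(4:ℝ)) ≤ h x) : False := by
  have hmeas : AEStronglyMeasurable (fun x => c₀ * (x - a) ^ (-(4:ℝ)))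
      (volume.restrict (Ioo a b)) :=
    (measurable_const.mul ((measurable_id.sub_const a).pow_const _)).aestronglyMeasurable
  have hψ : IntegrableOn (fun x => c₀ * (x - a) ^ (-(4:ℝ))) (Ioo a b) := by
    refine Integrable.mono' hint hmeas ?_
    refine (ae_restrict_iff' measurableSet_Ioo).mpr (ae_of_all _ ?_)
    intro x hx
    have h1 : (0:ℝ) < x - a := by linarith [hx.1]
    have h2 : (0:ℝ) ≤ (x - a) ^ (-(4:ℝ)) := Real.rpow_nonneg h1.le _
    rw [Real.norm_eq_abs, abs_of_nonneg (by positivity)]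
    exact hbnd x hx
  have hψ' : IntegrableOn (fun x => (x - a) ^ (-(4:ℝ))) (Ioo a b) :=
    (integrable_const_mul_iff (isUnit_iff_ne_zero.mpr hc₀.ne') _).mp hψ
  have h1 : IntervalIntegrable (fun x => (x - a) ^ (-(4:ℝ))) volume a b :=
    (intervalIntegrable_iff_integrableOn_Ioo_of_le hab.le).mpr hψ'
  have h2 := h1.comp_add_right a
  simp only [add_sub_cancel_right] at h2
  have h3 : IntegrableOn (fun x : ℝ => x ^ (-(4:ℝ))) (Ioo 0 (b - a)) := by
    have := (intervalIntegrable_iff_integrableOn_Ioo_of_le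
      (by linarith : a - a ≤ b - a)).mp h2
    simpa using this
  have := (intervalIntegral.integrableOn_Ioo_rpow_iff (by linarith : (0:ℝ) < b - a)).mp h3
  norm_num at this

lemma not_integrableOn_right (a b c₀ : ℝ) (hab : a < b) (hc₀ : 0 < c₀) (h : ℝ → ℝ)
    (hint : IntegrableOn h (Ioo a b))
    (hbnd : ∀ x ∈ Ioo a b, c₀ * (b - x) ^ (-(4:ℝ)) ≤ h x) : False := by
  have h1 : IntervalIntegrable h volume a b :=
    (intervalIntegrable_iff_integrableOn_Ioo_of_le hab.le).mpr hint
  have h2 : IntervalIntegrable (fun x => h (a + b - x)) volume b a := by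
    simpa using h1.comp_sub_left (a + b)
  have h3 : IntegrableOn (fun x => h (a + b - x)) (Ioo a b) :=
    (intervalIntegrable_iff_integrableOn_Ioo_of_le hab.le).mp h2.symm
  refine not_integrableOn_left a b c₀ hab hc₀ _ h3 ?_
  intro x hx
  have hx' : a + b - x ∈ Ioo a b := ⟨by linarith [hx.2], by linarith [hx.1]⟩
  have := hbnd _ hx'
  simpa [show b - (a + b - x) = x - a by ring] using this

lemma gderiv_ne_zero
    (hg : ContDiff ℝ 2 g) (hg' : ∀ x, |deriv g x| ≤ Cu) (hg'' : ∀ x, |deriv (deriv g) x| ≤ Cu)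
    (hpos : (0:ℝ) < ∫ x : ℝ, |deriv g x|)
    (hcderiv : ∀ x, deriv c x = |deriv g x| / ∫ t : ℝ, |deriv g t|)
    (hf_cont : Continuous f) (hf_pos : ∀ x, 0 < f x)
    (h32 : Integrable (fun x => f x * |deriv g x| ^ (2 - 2 : ℕ) / (deriv c x) ^ (2 + 2 : ℕ)))
    (x₀ : ℝ) : deriv g x₀ ≠ 0 := by
  intro hx₀
  set I := ∫ t : ℝ, |deriv g t| with hIdef
  have hI : 0 < I := hpos
  have h4 : Integrable (fun x => f x / (deriv c x) ^ 4) := by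
    have he : (fun x => f x * |deriv g x| ^ (2 - 2 : ℕ) / (deriv c x) ^ (2 + 2 : ℕ))
        = fun x => f x / (deriv c x) ^ 4 := by
      funext x; norm_num
    rwa [he] at h32
  have hW : ∃ w, deriv g w ≠ 0 := by
    by_contra hw
    push_neg at hw
    have hI0 : I = 0 := by rw [hIdef]; simp [hw]
    rw [hI0] at hI; exact lt_irrefl _ hI
  obtain ⟨w, hw⟩ := hW
  have hCu : 0 < Cu := lt_of_lt_of_le (abs_pos.mpr hw) (hg' w)
  have hlip := gderiv_lip hg hg''
  have hxw : x₀ ≠ w := fun h => hw (h ▸ hx₀)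
  rcases lt_or_gt_of_ne hxw with hlt | hgt
  · -- gap to the right of a := sSup of zeros below w
    have hZc : IsClosed ({x | deriv g x = 0} ∩ Iic w) :=
      (isClosed_eq (gderiv_cont hg) continuous_const).inter isClosed_Iic
    have hZne : ({x | deriv g x = 0} ∩ Iic w).Nonempty := ⟨x₀, hx₀, hlt.le⟩
    have hZbdd : BddAbove ({x | deriv g x = 0} ∩ Iic w) := ⟨w, fun z hz => hz.2⟩
    set a := sSup ({x | deriv g x = 0} ∩ Iic w) with hadef
    have haZ := hZc.csSup_mem hZne hZbdd
    have ha0 : deriv g a = 0 := haZ.1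
    have haw : a < w := lt_of_le_of_ne haZ.2 (fun h => hw (by rw [← h]; exact ha0))
    have hgap : ∀ x, a < x → x ≤ w → deriv g x ≠ 0 := fun x h1 h2 hx =>
      absurd (le_csSup hZbdd ⟨hx, h2⟩) (not_le.mpr h1)
    set b := min w (a + 1) with hbdef
    have hab : a < b := lt_min haw (by linarith)
    have hbw : b ≤ w := min_le_left _ _
    obtain ⟨xm, hxm, hmin⟩ := isCompact_Icc.exists_isMinOn (nonempty_Icc.mpr hab.le)
      (hf_cont.continuousOn (s := Icc a b))
    have hδ : 0 < f xm := hf_pos xm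
    refine not_integrableOn_left a b (f xm * (I / Cu) ^ 4) hab (by positivity) _
      h4.integrableOn ?_
    intro x hx
    have hxa : 0 < x - a := by linarith [hx.1]
    have hγpos : 0 < |deriv g x| := abs_pos.mpr (hgap x hx.1 (le_trans hx.2.le hbw))
    have hbnd : |deriv g x| ≤ Cu * (x - a) := by
      have h5 := hlip x a
      rw [ha0, sub_zero] at h5
      rwa [abs_of_pos hxa] at h5
    have hc' : deriv c x = |deriv g x| / I := hcderiv x
    have hcpos : 0 < deriv c x := by rw [hc']; positivity
    have hkey : deriv c x ≤ Cu * (x - a) / I := by rw [hc']; gcongr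
    have hδx : f xm ≤ f x := isMinOn_iff.mp hmin x ⟨hx.1.le, hx.2.le⟩
    have e1 : (x - a) ^ (-(4:ℝ)) = ((x - a) ^ (4:ℕ))⁻¹ := by
      rw [show -(4:ℝ) = -((4:ℕ):ℝ) by norm_num, Real.rpow_neg hxa.le, Real.rpow_natCast]
    have e2 : deriv c x ^ (4:ℕ) ≤ (Cu * (x - a) / I) ^ (4:ℕ) :=
      pow_le_pow_left₀ hcpos.le hkey 4
    calc f xm * (I / Cu) ^ 4 * (x - a) ^ (-(4:ℝ))
        = f xm / (Cu * (x - a) / I) ^ (4:ℕ) := by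
          rw [e1]; field_simp
      _ ≤ f x / (Cu * (x - a) / I) ^ (4:ℕ) := by gcongr <;> positivity
      _ ≤ f x / deriv c x ^ 4 :=
          div_le_div_of_nonneg_left (hf_pos x).le (by positivity) e2
  · -- gap to the left of a := sInf of zeros above w
    have hZc : IsClosed ({x | deriv g x = 0} ∩ Ici w) :=
      (isClosed_eq (gderiv_cont hg) continuous_const).inter isClosed_Ici
    have hZne : ({x | deriv g x = 0} ∩ Ici w).Nonempty := ⟨x₀, hx₀, hgt.le⟩
    have hZbdd : BddBelow ({x | deriv g x = 0} ∩ Ici w) := ⟨w, fun z hz => hz.2⟩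
    set a := sInf ({x | deriv g x = 0} ∩ Ici w) with hadef
    have haZ := hZc.csInf_mem hZne hZbdd
    have ha0 : deriv g a = 0 := haZ.1
    have haw : w < a := lt_of_le_of_ne haZ.2 (fun h => hw (by rw [h]; exact ha0))
    have hgap : ∀ x, w ≤ x → x < a → deriv g x ≠ 0 := fun x h1 h2 hx =>
      absurd (csInf_le hZbdd ⟨hx, h1⟩) (not_le.mpr h2)
    set b := max w (a - 1) with hbdef
    have hab : b < a := max_lt haw (by linarith)
    have hbw : w ≤ b := le_max_left _ _
    obtain ⟨xm, hxm, hmin⟩ := isCompact_Icc.exists_isMinOn (nonempty_Icc.mpr hab.le)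
      (hf_cont.continuousOn (s := Icc b a))
    have hδ : 0 < f xm := hf_pos xm
    refine not_integrableOn_right b a (f xm * (I / Cu) ^ 4) hab (by positivity) _
      h4.integrableOn ?_
    intro x hx
    have hxa : 0 < a - x := by linarith [hx.2]
    have hγpos : 0 < |deriv g x| := abs_pos.mpr (hgap x (le_trans hbw hx.1.le) hx.2)
    have hbnd : |deriv g x| ≤ Cu * (a - x) := by
      have h5 := hlip x a
      rw [ha0, sub_zero] at h5
      rwa [abs_of_neg (by linarith : x - a < 0), neg_sub] at h5
    have hc' : deriv c x = |deriv g x| / I := hcderiv x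
    have hcpos : 0 < deriv c x := by rw [hc']; positivity
    have hkey : deriv c x ≤ Cu * (a - x) / I := by rw [hc']; gcongr
    have hδx : f xm ≤ f x := isMinOn_iff.mp hmin x ⟨hx.1.le, hx.2.le⟩
    have e1 : (a - x) ^ (-(4:ℝ)) = ((a - x) ^ (4:ℕ))⁻¹ := by
      rw [show -(4:ℝ) = -((4:ℕ):ℝ) by norm_num, Real.rpow_neg hxa.le, Real.rpow_natCast]
    have e2 : deriv c x ^ (4:ℕ) ≤ (Cu * (a - x) / I) ^ (4:ℕ) :=
      pow_le_pow_left₀ hcpos.le hkey 4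
    calc f xm * (I / Cu) ^ 4 * (a - x) ^ (-(4:ℝ))
        = f xm / (Cu * (a - x) / I) ^ (4:ℕ) := by
          rw [e1]; field_simp
      _ ≤ f x / (Cu * (a - x) / I) ^ (4:ℕ) := by gcongr <;> positivity
      _ ≤ f x / deriv c x ^ 4 :=
          div_le_div_of_nonneg_left (hf_pos x).le (by positivity) e2

lemma abs_gdiff (hg : ContDiff ℝ 2 g) (hne : ∀ x, deriv g x ≠ 0) (u v : ℝ) :
    |g v - g u| = abs (∫ t in u..v, |deriv g t|) := by
  rw [ftc_g hg u v]
  rcases sign_const hg hne with h | h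
  · congr 1; exact intervalIntegral.integral_congr fun t _ => h t
  · rw [show (∫ t in u..v, deriv g t) = -∫ t in u..v, |deriv g t| by
      rw [← intervalIntegral.integral_neg]
      exact intervalIntegral.integral_congr fun t _ => h t, abs_neg]

lemma abs_intInt_abs_le {φ : ℝ → ℝ} (hφ : Continuous φ) {A B x y : ℝ}
    (hx : x ∈ Icc A B) (hy : y ∈ Icc A B) :
    abs (∫ t in x..y, |φ t|) ≤ ∫ t in Ioc A B, |φ t| := by
  have hint : IntegrableOn (fun t => |φ t|) (Ioc A B) := hφ.abs.integrableOn_Ioc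
  have hnn : 0 ≤ᶠ[ae (volume.restrict (Ioc A B))] fun t => |φ t| :=
    ae_of_all _ fun t => abs_nonneg _
  rcases le_total x y with h | h
  · rw [intervalIntegral.integral_of_le h,
      abs_of_nonneg (setIntegral_nonneg measurableSet_Ioc fun t _ => abs_nonneg _)]
    exact setIntegral_mono_set hint hnn ((Ioc_subset_Ioc hx.1 hy.2).eventuallyLE)
  · rw [intervalIntegral.integral_symm, abs_neg, intervalIntegral.integral_of_le h,
      abs_of_nonneg (setIntegral_nonneg measurableSet_Ioc fun t _ => abs_nonneg _)]
    exact setIntegral_mono_set hint hnn ((Ioc_subset_Ioc hy.1 hx.2).eventuallyLE)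

lemma abs_intInt_abs_le_total {φ : ℝ → ℝ} (hint : Integrable (fun t => |φ t|)) (u v : ℝ) :
    abs (∫ t in u..v, |φ t|) ≤ ∫ t : ℝ, |φ t| := by
  rcases le_total u v with h | h
  · rw [intervalIntegral.integral_of_le h,
      abs_of_nonneg (setIntegral_nonneg measurableSet_Ioc fun t _ => abs_nonneg _)]
    exact setIntegral_le_integral hint (ae_of_all _ fun t => abs_nonneg _)
  · rw [intervalIntegral.integral_symm, abs_neg, intervalIntegral.integral_of_le h,
      abs_of_nonneg (setIntegral_nonneg measurableSet_Ioc fun t _ => abs_nonneg _)]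
    exact setIntegral_le_integral hint (ae_of_all _ fun t => abs_nonneg _)

lemma gdiff_le_I (hg : ContDiff ℝ 2 g) (hne : ∀ x, deriv g x ≠ 0)
    (hint : Integrable (fun x => |deriv g x|)) (u v : ℝ) :
    |g v - g u| ≤ ∫ x : ℝ, |deriv g x| := by
  rw [abs_gdiff hg hne]
  exact abs_intInt_abs_le_total hint u v

lemma int_abs_eq (hcc : ContDiff ℝ 1 c)
    (hcderiv : ∀ x, deriv c x = |deriv g x| / ∫ t : ℝ, |deriv g t|)
    (hI : (∫ x : ℝ, |deriv g x|) ≠ 0) (u v : ℝ) :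
    ∫ t in u..v, |deriv g t| = (∫ x : ℝ, |deriv g x|) * (c v - c u) := by
  have he : ∀ t, |deriv g t| = (∫ x : ℝ, |deriv g x|) * deriv c t := by
    intro t; rw [hcderiv t]; field_simp
  rw [intervalIntegral.integral_congr (fun t _ => he t),
    intervalIntegral.integral_const_mul, ← ftc_c hcc u v]

lemma c_top (hmono : StrictMono c) (hrange : range c = Ioo (0:ℝ) 1) :
    Tendsto c atTop (𝓝 1) := by
  have hb : BddAbove (range c) := by rw [hrange]; exact bddAbove_Ioo
  have h := tendsto_atTop_ciSup hmono.monotone hb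
  rwa [show (⨆ x, c x) = 1 from by rw [iSup, hrange, csSup_Ioo zero_lt_one]] at h

lemma c_bot (hmono : StrictMono c) (hrange : range c = Ioo (0:ℝ) 1) :
    Tendsto c atBot (𝓝 0) := by
  have hb : BddBelow (range c) := by rw [hrange]; exact bddBelow_Ioo
  have h := tendsto_atBot_ciInf hmono.monotone hb
  rwa [show (⨅ x, c x) = 0 from by rw [iInf, hrange, csInf_Ioo zero_lt_one]] at h

lemma c_mem (hrange : range c = Ioo (0:ℝ) 1) (x : ℝ) : c x ∈ Ioo (0:ℝ) 1 :=
  hrange ▸ mem_range_self x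

lemma derivc_int (hint : Integrable (fun x => |deriv g x|))
    (hcderiv : ∀ x, deriv c x = |deriv g x| / ∫ t : ℝ, |deriv g t|) :
    Integrable (deriv c) :=
  (hint.div_const _).congr (ae_of_all _ fun x => (hcderiv x).symm)

lemma int_Ioi_derivc (hcc : ContDiff ℝ 1 c) (hmono : StrictMono c)
    (hrange : range c = Ioo (0:ℝ) 1) (hintc : Integrable (deriv c)) (y : ℝ) :
    ∫ x in Ioi y, deriv c x = 1 - c y :=
  integral_Ioi_of_hasDerivAt_of_tendsto ((cdiff hcc).continuous.continuousWithinAt)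
    (fun x _ => ((cdiff hcc) x).hasDerivAt) hintc.integrableOn (c_top hmono hrange)

lemma int_Iio_derivc (hcc : ContDiff ℝ 1 c) (hmono : StrictMono c)
    (hrange : range c = Ioo (0:ℝ) 1) (hintc : Integrable (deriv c)) (y : ℝ) :
    ∫ x in Iio y, deriv c x = c y := by
  have h1 : ∫ x in Iic y, deriv c x = c y - 0 :=
    integral_Iic_of_hasDerivAt_of_tendsto ((cdiff hcc).continuous.continuousWithinAt)
      (fun x _ => ((cdiff hcc) x).hasDerivAt) hintc.integrableOn (c_bot hmono hrange)
  rw [setIntegral_congr_set Iio_ae_eq_Iic, h1, sub_zero]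

lemma p_lt (hmono : StrictMono c) {K : ℕ} {p : ℕ → ℝ} (hp : IsBoundaries c K p)
    {j k : ℕ} (h1 : 1 ≤ j) (hjk : j < k) (hk : k ≤ K - 1) : p j < p k := by
  have hK0 : (0:ℝ) < (K:ℝ) := by
    have : 1 ≤ K - 1 := le_trans (by omega) hk
    have : 2 ≤ K := by omega
    positivity
  have hj := hp j h1 (le_trans hjk.le hk)
  have hk' := hp k (by omega) hk
  have hcc : c (p j) < c (p k) := by
    rw [hj, hk']
    exact (div_lt_div_iff_of_pos_right hK0).mpr (by exact_mod_cast hjk)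
  exact hmono.lt_iff_lt.mp hcc

lemma p_mono (hmono : StrictMono c) {K : ℕ} {p : ℕ → ℝ} (hp : IsBoundaries c K p) :
    ∀ j k : ℕ, 1 ≤ j → j ≤ k → k ≤ K - 1 → p j ≤ p k := by
  intro j k h1 hjk hk
  rcases eq_or_lt_of_le hjk with rfl | h
  · exact le_rfl
  · exact (p_lt hmono hp h1 h hk).le

lemma p_top (hmono : StrictMono c) (hrange : range c = Ioo (0:ℝ) 1)
    {p : ℕ → ℕ → ℝ} (hp : ∀ K, 3 ≤ K → IsBoundaries c K (p K)) :
    Tendsto (fun K : ℕ => p K (K - 1)) atTop atTop := by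
  rw [tendsto_atTop_atTop]
  intro M
  have hcM : c M < 1 := (c_mem hrange M).2
  obtain ⟨n, hn⟩ := exists_nat_one_div_lt (by linarith : (0:ℝ) < 1 - c M)
  refine ⟨max 3 (n + 1), fun K hK => ?_⟩
  have hK3 : 3 ≤ K := le_trans (le_max_left _ _) hK
  have hKn : n + 1 ≤ K := le_trans (le_max_right _ _) hK
  have hKr : (0:ℝ) < K := by positivity
  have hc : c (p K (K-1)) = ((K-1 : ℕ):ℝ)/K := hp K hK3 (K-1) (by omega) le_rfl
  have hlt : c M < c (p K (K-1)) := by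
    rw [hc]
    have e1 : ((K-1 : ℕ):ℝ)/K = 1 - 1/K := by
      rw [Nat.cast_sub (by omega : 1 ≤ K), Nat.cast_one]
      field_simp
    have e2 : (1:ℝ)/K ≤ 1/(n+1) := by
      apply one_div_le_one_div_of_le (by positivity)
      exact_mod_cast hKn
    rw [e1]
    have : (1:ℝ)/(n+1) < 1 - c M := by exact_mod_cast hn
    linarith
  exact (hmono.lt_iff_lt.mp hlt).le

lemma p_bot (hmono : StrictMono c) (hrange : range c = Ioo (0:ℝ) 1)
    {p : ℕ → ℕ → ℝ} (hp : ∀ K, 3 ≤ K → IsBoundaries c K (p K)) :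
    Tendsto (fun K : ℕ => p K 1) atTop atBot := by
  rw [tendsto_atTop_atBot]
  intro M
  have hcM : 0 < c M := (c_mem hrange M).1
  obtain ⟨n, hn⟩ := exists_nat_one_div_lt hcM
  refine ⟨max 3 (n + 1), fun K hK => ?_⟩
  have hK3 : 3 ≤ K := le_trans (le_max_left _ _) hK
  have hKn : n + 1 ≤ K := le_trans (le_max_right _ _) hK
  have hKr : (0:ℝ) < K := by positivity
  have hc : c (p K 1) = 1/(K:ℝ) := by
    have := hp K hK3 1 le_rfl (by omega)
    rw [this]; norm_num
  have hlt : c (p K 1) < c M := by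
    rw [hc]
    have e2 : (1:ℝ)/K ≤ 1/(n+1) := by
      apply one_div_le_one_div_of_le (by positivity)
      exact_mod_cast hKn
    have : (1:ℝ)/(n+1) < c M := by exact_mod_cast hn
    linarith
  exact (hmono.lt_iff_lt.mp hlt).le

lemma c_p_last {K : ℕ} {p : ℕ → ℝ} (hp : IsBoundaries c K p) (hK : 3 ≤ K) :
    1 - c (p (K-1)) = 1/(K:ℝ) := by
  rw [hp (K-1) (by omega) le_rfl, Nat.cast_sub (by omega : 1 ≤ K), Nat.cast_one]
  have hKr : (0:ℝ) < K := by positivity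
  field_simp
  ring

lemma c_p_one {K : ℕ} {p : ℕ → ℝ} (hp : IsBoundaries c K p) (hK : 3 ≤ K) :
    c (p 1) = 1/(K:ℝ) := by
  have := hp 1 le_rfl (by omega)
  rw [this]; norm_num

lemma sq_mul_f_int (hg : ContDiff ℝ 2 g) (hne : ∀ x, deriv g x ≠ 0)
    (hint : Integrable (fun x => |deriv g x|)) (hIf : Integrable f)
    (hf_cont : Continuous f) (hf_pos : ∀ x, 0 < f x) (v : ℝ) :
    Integrable (fun x => (g x - g v)^2 * f x) := by
  refine Integrable.mono' (hIf.const_mul ((∫ x : ℝ, |deriv g x|)^2)) ?_ (ae_of_all _ ?_)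
  · exact ((((gdiff hg).continuous.sub continuous_const).pow 2).mul hf_cont).aestronglyMeasurable
  · intro x
    rw [Real.norm_eq_abs, abs_of_nonneg (mul_nonneg (sq_nonneg _) (hf_pos x).le)]
    have h1 : |g x - g v| ≤ ∫ x : ℝ, |deriv g x| := gdiff_le_I hg hne hint v x
    have h2 : (g x - g v)^2 ≤ (∫ x : ℝ, |deriv g x|)^2 := by
      rw [← sq_abs]
      exact pow_le_pow_left₀ (abs_nonneg _) h1 2
    exact mul_le_mul_of_nonneg_right h2 (hf_pos x).le

lemma sum_integral_Ioc (h : ℝ → ℝ) (hh : Integrable h) (q : ℕ → ℝ) (n : ℕ) (hn : 2 ≤ n)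
    (hmono : ∀ j k, 1 ≤ j → j ≤ k → k ≤ n → q j ≤ q k) :
    ∑ k ∈ Finset.Icc 2 n, ∫ x in Ioc (q (k-1)) (q k), h x = ∫ x in Ioc (q 1) (q n), h x := by
  induction n, hn using Nat.le_induction with
  | base => simp
  | succ m hm ih =>
    rw [Finset.sum_Icc_succ_top (by omega : 2 ≤ m + 1),
      ih (fun j k h1 hjk hk => hmono j k h1 hjk (by omega))]
    have h1 : q 1 ≤ q m := hmono 1 m le_rfl (by omega) (by omega)
    have h2 : q m ≤ q (m+1) := hmono m (m+1) (by omega) (by omega) le_rfl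
    rw [show m + 1 - 1 = m from rfl,
      ← Ioc_union_Ioc_eq_Ioc h1 h2,
      setIntegral_union (Ioc_disjoint_Ioc_of_le le_rfl) measurableSet_Ioc
        hh.integrableOn hh.integrableOn]

lemma split3 (h : ℝ → ℝ) (hh : Integrable h) {u v : ℝ} (huv : u ≤ v) :
    ∫ x, h x = (∫ x in Iic u, h x) + (∫ x in Ioc u v, h x) + ∫ x in Ioi v, h x := by
  have h2 : ∫ x in Iic v, h x = (∫ x in Iic u, h x) + ∫ x in Ioc u v, h x := by
    rw [← setIntegral_union (Iic_disjoint_Ioc le_rfl) measurableSet_Ioc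
      hh.integrableOn hh.integrableOn, Iic_union_Ioc_eq_Iic huv]
  have h3 := integral_add_compl (measurableSet_Iic (a := v)) hh
  rw [compl_Iic] at h3
  rw [← h3, h2]

lemma main_split {K : ℕ} (hK : 3 ≤ K) {p : ℕ → ℝ} {Q : ℝ → ℝ}
    (hmono : StrictMono c) (hp : IsBoundaries c K p) (hQ : IsCompanderQuantizer K p Q)
    (hg : ContDiff ℝ 2 g) (hne : ∀ x, deriv g x ≠ 0)
    (hint : Integrable (fun x => |deriv g x|)) (hIf : Integrable f)
    (hf_cont : Continuous f) (hf_pos : ∀ x, 0 < f x) :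
    ∫ x, (g x - g (Q x))^2 * f x
      = (∫ x in Iic (p 1), (g x - g (p 1))^2 * f x)
        + (∑ k ∈ Finset.Icc 2 (K-1), ∫ x in Ioc (p (k-1)) (p k),
            (g x - g ((p (k-1) + p k)/2))^2 * f x)
        + ∫ x in Ioi (p (K-1)), (g x - g (p (K-1)))^2 * f x := by
  classical
  have hpm := p_mono hmono hp
  have hFx : (fun x => (g x - g (Q x))^2 * f x)
      = fun x => (Iic (p 1)).indicator (fun y => (g y - g (p 1))^2 * f y) x
        + (∑ k ∈ Finset.Icc 2 (K-1),
            (Ioc (p (k-1)) (p k)).indicator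
              (fun y => (g y - g ((p (k-1) + p k)/2))^2 * f y) x)
        + (Ioi (p (K-1))).indicator (fun y => (g y - g (p (K-1)))^2 * f y) x := by
    funext x
    by_cases h1 : x ≤ p 1
    · rw [hQ.1 x h1]
      have hW : ∀ k ∈ Finset.Icc 2 (K-1),
          (Ioc (p (k-1)) (p k)).indicator
            (fun y => (g y - g ((p (k-1) + p k)/2))^2 * f y) x = 0 := by
        intro k hk
        simp only [Finset.mem_Icc] at hk
        apply indicator_of_notMem
        intro hmem
        have hle : p 1 ≤ p (k-1) := hpm 1 (k-1) le_rfl (by omega) (by omega)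
        exact absurd (lt_of_le_of_lt hle hmem.1) (not_lt.mpr h1)
      have hno : x ∉ Ioi (p (K-1)) := by
        have hle : p 1 ≤ p (K-1) := hpm 1 (K-1) le_rfl (by omega) le_rfl
        simp only [mem_Ioi, not_lt]; linarith
      rw [Finset.sum_eq_zero hW, indicator_of_mem (mem_Iic.mpr h1),
        indicator_of_notMem hno]
      ring
    · push_neg at h1
      by_cases h2 : p (K-1) < x
      · rw [hQ.2.1 x h2]
        have hW : ∀ k ∈ Finset.Icc 2 (K-1),
            (Ioc (p (k-1)) (p k)).indicator
              (fun y => (g y - g ((p (k-1) + p k)/2))^2 * f y) x = 0 := by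
          intro k hk
          simp only [Finset.mem_Icc] at hk
          apply indicator_of_notMem
          intro hmem
          have hle : p k ≤ p (K-1) := hpm k (K-1) (by omega) (by omega) le_rfl
          exact absurd hmem.2 (not_le.mpr (lt_of_le_of_lt hle h2))
        have hno : x ∉ Iic (p 1) := by simp only [mem_Iic, not_le]; exact h1
        rw [Finset.sum_eq_zero hW, indicator_of_notMem hno,
          indicator_of_mem (mem_Ioi.mpr h2)]
        ring
      · push_neg at h2
        set s : Finset ℕ := (Finset.Icc 2 (K-1)).filter (fun k => x ≤ p k) with hs
        have hsne : s.Nonempty := ⟨K-1, by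
          simp only [hs, Finset.mem_filter, Finset.mem_Icc]
          exact ⟨⟨by omega, le_rfl⟩, h2⟩⟩
        have hk₀s := s.min'_mem hsne
        set k₀ := s.min' hsne with hk₀def
        simp only [hs, Finset.mem_filter, Finset.mem_Icc] at hk₀s
        obtain ⟨⟨hk₀2, hk₀K⟩, hk₀x⟩ := hk₀s
        have hxT : x ∈ Ioc (p (k₀-1)) (p k₀) := by
          refine ⟨?_, hk₀x⟩
          rcases eq_or_lt_of_le hk₀2 with he | hlt
          · have e : k₀ - 1 = 1 := by omega
            rw [e]; exact h1
          · by_contra hcon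
            push_neg at hcon
            have hmem : k₀ - 1 ∈ s := by
              simp only [hs, Finset.mem_filter, Finset.mem_Icc]
              exact ⟨⟨by omega, by omega⟩, hcon⟩
            have := s.min'_le _ hmem
            omega
        rw [hQ.2.2 k₀ hk₀2 hk₀K x hxT]
        have hsum : (∑ k ∈ Finset.Icc 2 (K-1),
            (Ioc (p (k-1)) (p k)).indicator
              (fun y => (g y - g ((p (k-1) + p k)/2))^2 * f y) x)
            = (g x - g ((p (k₀-1) + p k₀)/2))^2 * f x := by
          rw [Finset.sum_eq_single_of_mem k₀ (Finset.mem_Icc.mpr ⟨hk₀2, hk₀K⟩)]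
          · exact indicator_of_mem hxT _
          · intro b hb hbne
            simp only [Finset.mem_Icc] at hb
            apply indicator_of_notMem
            intro hmem
            rcases lt_or_gt_of_ne hbne with hblt | hbgt
            · have hmem' : b ∈ s := by
                simp only [hs, Finset.mem_filter, Finset.mem_Icc]
                exact ⟨⟨hb.1, hb.2⟩, hmem.2⟩
              have := s.min'_le _ hmem'
              omega
            · have hle : p k₀ ≤ p (b-1) := hpm k₀ (b-1) (by omega) (by omega) (by omega)
              exact absurd hmem.1 (not_lt.mpr (le_trans hk₀x hle))
        have hno1 : x ∉ Iic (p 1) := by simp only [mem_Iic, not_le]; exact h1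
        have hno2 : x ∉ Ioi (p (K-1)) := by simp only [mem_Ioi, not_lt]; exact h2
        rw [hsum, indicator_of_notMem hno1, indicator_of_notMem hno2]
        ring
  rw [hFx]
  have hIA : Integrable ((Iic (p 1)).indicator (fun y => (g y - g (p 1))^2 * f y)) :=
    (sq_mul_f_int hg hne hint hIf hf_cont hf_pos (p 1)).indicator measurableSet_Iic
  have hIB : ∀ k ∈ Finset.Icc 2 (K-1), Integrable
      ((Ioc (p (k-1)) (p k)).indicator
        (fun y => (g y - g ((p (k-1) + p k)/2))^2 * f y)) := fun k _ =>
    (sq_mul_f_int hg hne hint hIf hf_cont hf_pos _).indicator measurableSet_Ioc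
  have hIC : Integrable ((Ioi (p (K-1))).indicator
      (fun y => (g y - g (p (K-1)))^2 * f y)) :=
    (sq_mul_f_int hg hne hint hIf hf_cont hf_pos _).indicator measurableSet_Ioi
  have hS : Integrable (fun x => ∑ k ∈ Finset.Icc 2 (K-1),
      (Ioc (p (k-1)) (p k)).indicator
        (fun y => (g y - g ((p (k-1) + p k)/2))^2 * f y) x) :=
    integrable_finset_sum _ hIB
  have hAB : Integrable (fun x =>
      (Iic (p 1)).indicator (fun y => (g y - g (p 1))^2 * f y) x
      + ∑ k ∈ Finset.Icc 2 (K-1),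
          (Ioc (p (k-1)) (p k)).indicator
            (fun y => (g y - g ((p (k-1) + p k)/2))^2 * f y) x) :=
    hIA.add hS
  rw [integral_add hAB hIC, integral_add hIA hS,
    integral_finset_sum _ hIB, integral_indicator measurableSet_Iic,
    integral_indicator measurableSet_Ioi]
  congr 2
  · exact Finset.sum_congr rfl fun k _ => integral_indicator measurableSet_Ioc

lemma int_sq_center {A B : ℝ} (h : A ≤ B) :
    ∫ x in Ioc A B, (x - (A+B)/2)^2 = (B-A)^3/12 := by
  rw [← intervalIntegral.integral_of_le h,
    intervalIntegral.integral_comp_sub_right (fun x => x^2) ((A+B)/2),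
    integral_pow]
  push_cast
  ring

lemma cell_core (hg : ContDiff ℝ 2 g) (hne : ∀ x, deriv g x ≠ 0)
    (hf_cont : Continuous f) (hf_pos : ∀ x, 0 < f x)
    {A B ε₀ : ℝ} (hAB : A < B) (hε₀ : 0 < ε₀)
    (hγosc : ∀ x ∈ Icc A B, abs (|deriv g x| - |deriv g ((A+B)/2)|) ≤ ε₀)
    (hfosc : ∀ x ∈ Icc A B, |f x - f ((A+B)/2)| ≤ ε₀)
    (hγlb : ε₀ ≤ |deriv g ((A+B)/2)|) :
    ((|deriv g ((A+B)/2)| - ε₀)^2 * (f ((A+B)/2) - ε₀)) * ((B-A)^3/12)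
        ≤ ∫ x in Ioc A B, (g x - g ((A+B)/2))^2 * f x ∧
    (∫ x in Ioc A B, (g x - g ((A+B)/2))^2 * f x)
        ≤ ((|deriv g ((A+B)/2)| + ε₀)^2 * (f ((A+B)/2) + ε₀)) * ((B-A)^3/12) := by
  set m := (A+B)/2 with hm
  set γm := |deriv g m| with hγm
  set fm := f m with hfm
  have hmI : m ∈ Icc A B := ⟨by rw [hm]; linarith, by rw [hm]; linarith⟩
  have hγcont : Continuous (fun t => |deriv g t|) := (gderiv_cont hg).abs
  have hγnn : (0:ℝ) ≤ γm - ε₀ := by linarith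
  have hup : ∀ x ∈ Icc A B, (g x - g m)^2 ≤ (γm + ε₀)^2 * (x - m)^2 := by
    intro x hx
    have h1 : |g x - g m| ≤ (γm + ε₀) * |x - m| := by
      rw [abs_gdiff hg hne m x]
      have hb := intervalIntegral.norm_integral_le_of_norm_le_const (a := m) (b := x)
        (C := γm + ε₀) (f := fun t => |deriv g t|) ?_
      · simpa [Real.norm_eq_abs] using hb
      · intro t ht
        have htI : t ∈ Icc A B := by
          rcases Set.mem_uIoc.mp ht with h | h
          · exact ⟨le_trans hmI.1 h.1.le, le_trans h.2 hx.2⟩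
          · exact ⟨le_trans hx.1 h.1.le, le_trans h.2 hmI.2⟩
        have h2 := abs_le.mp (hγosc t htI)
        rw [Real.norm_eq_abs, abs_abs]
        linarith [h2.2]
    calc (g x - g m)^2 = |g x - g m|^2 := (sq_abs _).symm
      _ ≤ ((γm + ε₀) * |x - m|)^2 := pow_le_pow_left₀ (abs_nonneg _) h1 2
      _ = (γm + ε₀)^2 * (x - m)^2 := by rw [mul_pow, sq_abs]
  have hlo : ∀ x ∈ Icc A B, (γm - ε₀)^2 * (x - m)^2 ≤ (g x - g m)^2 := by
    intro x hx
    have key : (γm - ε₀) * |x - m| ≤ |g x - g m| := by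
      rw [abs_gdiff hg hne m x]
      rcases le_total m x with h | h
      · have hge : (γm - ε₀) * (x - m) ≤ ∫ t in Ioc m x, |deriv g t| := by
          have hb := setIntegral_ge_of_const_le (c := γm - ε₀)
            (f := fun t => |deriv g t|) measurableSet_Ioc
            (show volume (Ioc m x) < ⊤ from measure_Ioc_lt_top).ne
            ?_ hγcont.integrableOn_Ioc
          · rwa [Real.volume_real_Ioc_of_le (by linarith : m ≤ x), smul_eq_mul, mul_comm] at hb
          · intro t ht
            have htI : t ∈ Icc A B := ⟨le_trans hmI.1 ht.1.le, le_trans ht.2 hx.2⟩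
            have h2 := abs_le.mp (hγosc t htI)
            linarith [h2.1]
        rw [intervalIntegral.integral_of_le h,
          abs_of_nonneg (setIntegral_nonneg measurableSet_Ioc fun t _ => abs_nonneg _),
          abs_of_nonneg (by linarith : (0:ℝ) ≤ x - m)]
        exact hge
      · have hge : (γm - ε₀) * (m - x) ≤ ∫ t in Ioc x m, |deriv g t| := by
          have hb := setIntegral_ge_of_const_le (c := γm - ε₀)
            (f := fun t => |deriv g t|) measurableSet_Ioc
            (show volume (Ioc x m) < ⊤ from measure_Ioc_lt_top).ne
            ?_ hγcont.integrableOn_Ioc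
          · rwa [Real.volume_real_Ioc_of_le (by linarith : x ≤ m), smul_eq_mul, mul_comm] at hb
          · intro t ht
            have htI : t ∈ Icc A B := ⟨le_trans hx.1 ht.1.le, le_trans ht.2 hmI.2⟩
            have h2 := abs_le.mp (hγosc t htI)
            linarith [h2.1]
        rw [intervalIntegral.integral_symm, abs_neg, intervalIntegral.integral_of_le h,
          abs_of_nonneg (setIntegral_nonneg measurableSet_Ioc fun t _ => abs_nonneg _),
          abs_sub_comm, abs_of_nonneg (by linarith : (0:ℝ) ≤ m - x)]
        exact hge
    calc (γm - ε₀)^2 * (x - m)^2 = ((γm - ε₀) * |x - m|)^2 := by rw [mul_pow, sq_abs]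
      _ ≤ |g x - g m|^2 := pow_le_pow_left₀ (by positivity) key 2
      _ = (g x - g m)^2 := sq_abs _
  have hisc : ∫ x in Ioc A B, (x - m)^2 = (B-A)^3/12 := by
    rw [hm]; exact int_sq_center hAB.le
  have hcont1 : Continuous (fun x => (g x - g m)^2 * f x) :=
    (((gdiff hg).continuous.sub continuous_const).pow 2).mul hf_cont
  constructor
  · have hpt : ∀ x ∈ Ioc A B,
        ((γm - ε₀)^2 * (fm - ε₀)) * (x - m)^2 ≤ (g x - g m)^2 * f x := by
      intro x hx
      have hxI : x ∈ Icc A B := ⟨hx.1.le, hx.2⟩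
      have hfx : fm - ε₀ ≤ f x := by
        have h2 := abs_le.mp (hfosc x hxI); linarith [h2.1]
      calc ((γm - ε₀)^2 * (fm - ε₀)) * (x - m)^2
          = ((γm - ε₀)^2 * (x - m)^2) * (fm - ε₀) := by ring
        _ ≤ ((γm - ε₀)^2 * (x - m)^2) * f x :=
            mul_le_mul_of_nonneg_left hfx (by positivity)
        _ ≤ (g x - g m)^2 * f x :=
            mul_le_mul_of_nonneg_right (hlo x hxI) (hf_pos x).le
    calc ((γm - ε₀)^2 * (fm - ε₀)) * ((B-A)^3/12)
        = ∫ x in Ioc A B, ((γm - ε₀)^2 * (fm - ε₀)) * (x - m)^2 := by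
          rw [integral_const_mul, hisc]
      _ ≤ ∫ x in Ioc A B, (g x - g m)^2 * f x :=
          setIntegral_mono_on
            ((continuous_const.mul ((continuous_id.sub continuous_const).pow 2)).integrableOn_Ioc)
            hcont1.integrableOn_Ioc measurableSet_Ioc hpt
  · have hpt : ∀ x ∈ Ioc A B,
        (g x - g m)^2 * f x ≤ ((γm + ε₀)^2 * (fm + ε₀)) * (x - m)^2 := by
      intro x hx
      have hxI : x ∈ Icc A B := ⟨hx.1.le, hx.2⟩
      have hfx : f x ≤ fm + ε₀ := by
        have h2 := abs_le.mp (hfosc x hxI); linarith [h2.2]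
      calc (g x - g m)^2 * f x
          ≤ ((γm + ε₀)^2 * (x - m)^2) * (fm + ε₀) :=
            mul_le_mul (hup x hxI) hfx (hf_pos x).le (by positivity)
        _ = ((γm + ε₀)^2 * (fm + ε₀)) * (x - m)^2 := by ring
    calc (∫ x in Ioc A B, (g x - g m)^2 * f x)
        ≤ ∫ x in Ioc A B, ((γm + ε₀)^2 * (fm + ε₀)) * (x - m)^2 :=
          setIntegral_mono_on hcont1.integrableOn_Ioc
            ((continuous_const.mul ((continuous_id.sub continuous_const).pow 2)).integrableOn_Ioc)
            measurableSet_Ioc hpt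
      _ = ((γm + ε₀)^2 * (fm + ε₀)) * ((B-A)^3/12) := by
          rw [integral_const_mul, hisc]

set_option maxHeartbeats 2000000 in
lemma cell_bounds
    (hg : ContDiff ℝ 2 g) (hne : ∀ x, deriv g x ≠ 0)
    (hf_cont : Continuous f) (hf_pos : ∀ x, 0 < f x)
    (hcc : ContDiff ℝ 1 c)
    (hcderiv : ∀ x, deriv c x = |deriv g x| / ∫ t : ℝ, |deriv g t|)
    (hIpos : (0:ℝ) < ∫ x : ℝ, |deriv g x|)
    {A B : ℝ} {K : ℕ} (hAB : A < B) (hK : (0:ℝ) < (K:ℝ))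
    (hcell : c B - c A = 1/(K:ℝ))
    {M η ε₀ ε' δγ δf : ℝ}
    (hη : 0 < η) (hη1 : η ≤ 1) (hε' : 0 < ε') (hε'1 : ε' ≤ 1) (hε₀ : 0 < ε₀)
    (hδγpos : 0 < δγ) (hδfpos : 0 < δf)
    (hδγ : ∀ x ∈ Icc (-(M+1)) (M+1), δγ ≤ |deriv g x|)
    (hδf : ∀ x ∈ Icc (-(M+1)) (M+1), δf ≤ f x)
    (hγuc : ∀ x ∈ Icc (-(M+1)) (M+1), ∀ y ∈ Icc (-(M+1)) (M+1),
      |x - y| ≤ η → abs (|deriv g x| - |deriv g y|) ≤ ε₀)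
    (hfuc : ∀ x ∈ Icc (-(M+1)) (M+1), ∀ y ∈ Icc (-(M+1)) (M+1),
      |x - y| ≤ η → |f x - f y| ≤ ε₀)
    (hε₀γ : 3 * ε₀ ≤ ε' * δγ) (hε₀f : 3 * ε₀ ≤ ε' * δf)
    (hKbig : 2 * (∫ x : ℝ, |deriv g x|) / (δγ * η) < (K:ℝ)) :
    (1-ε')^3 * ((∫ x : ℝ, |deriv g x|)^2/12) *
        (∫ x in Ioc A B, (Ioc (-M) M).indicator f x)
      ≤ (K:ℝ)^2 * ∫ x in Ioc A B, (g x - g ((A+B)/2))^2 * f x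
    ∧ (K:ℝ)^2 * (∫ x in Ioc A B, (g x - g ((A+B)/2))^2 * f x)
      ≤ (1+ε')^3 * ((∫ x : ℝ, |deriv g x|)^2/12) * (∫ x in Ioc A B, f x)
        + (∫ x : ℝ, |deriv g x|)^2 * ∫ x in Ioc A B, ((Ioc (-M) M)ᶜ).indicator f x := by
  have hint : Integrable (fun x => |deriv g x|) := by
    by_contra hn
    rw [MeasureTheory.integral_undef hn] at hIpos
    exact lt_irrefl _ hIpos
  set Iv := ∫ x : ℝ, |deriv g x| with hIv
  set m := (A+B)/2 with hm
  have hmI : m ∈ Icc A B := ⟨by rw [hm]; linarith, by rw [hm]; linarith⟩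
  have hγcont : Continuous (fun t => |deriv g t|) := (gderiv_cont hg).abs
  have hcont1 : Continuous (fun x => (g x - g m)^2 * f x) :=
    (((gdiff hg).continuous.sub continuous_const).pow 2).mul hf_cont
  have hIK : ∫ t in Ioc A B, |deriv g t| = Iv / (K:ℝ) := by
    rw [← intervalIntegral.integral_of_le hAB.le,
      int_abs_eq hcc hcderiv hIpos.ne', hcell]
    rw [hIv]; ring
  have hunif : ∀ x ∈ Ioc A B, (g x - g m)^2 ≤ (Iv/(K:ℝ))^2 := by
    intro x hx
    have h1 : |g x - g m| ≤ Iv/(K:ℝ) := by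
      rw [abs_gdiff hg hne m x, ← hIK]
      exact abs_intInt_abs_le (gderiv_cont hg) hmI ⟨hx.1.le, hx.2⟩
    calc (g x - g m)^2 = |g x - g m|^2 := (sq_abs _).symm
      _ ≤ (Iv/(K:ℝ))^2 := pow_le_pow_left₀ (abs_nonneg _) h1 2
  have hU0 : (K:ℝ)^2 * (∫ x in Ioc A B, (g x - g m)^2 * f x)
      ≤ Iv^2 * ∫ x in Ioc A B, f x := by
    have h1 : (∫ x in Ioc A B, (g x - g m)^2 * f x)
        ≤ ∫ x in Ioc A B, (Iv/(K:ℝ))^2 * f x := by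
      refine setIntegral_mono_on hcont1.integrableOn_Ioc
        ((continuous_const.mul hf_cont).integrableOn_Ioc) measurableSet_Ioc ?_
      intro x hx
      exact mul_le_mul_of_nonneg_right (hunif x hx) (hf_pos x).le
    rw [integral_const_mul] at h1
    calc (K:ℝ)^2 * (∫ x in Ioc A B, (g x - g m)^2 * f x)
        ≤ (K:ℝ)^2 * ((Iv/(K:ℝ))^2 * ∫ x in Ioc A B, f x) :=
          mul_le_mul_of_nonneg_left h1 (by positivity)
      _ = Iv^2 * ∫ x in Ioc A B, f x := by field_simp
  have hfJnn : (0:ℝ) ≤ ∫ x in Ioc A B, f x :=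
    setIntegral_nonneg measurableSet_Ioc fun x _ => (hf_pos x).le
  have hcellnn : (0:ℝ) ≤ ∫ x in Ioc A B, (g x - g m)^2 * f x :=
    setIntegral_nonneg measurableSet_Ioc fun x _ =>
      mul_nonneg (sq_nonneg _) (hf_pos x).le
  by_cases hmeet : (Ioc A B ∩ Icc (-M) M).Nonempty
  · obtain ⟨t, htJ, htM⟩ := hmeet
    have hl : 0 < min (B-A) 1 := lt_min (by linarith) one_pos
    have hlle : min (B-A) 1 ≤ B - A := min_le_left _ _
    have hl1 : min (B-A) 1 ≤ 1 := min_le_right _ _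
    have hIK' : δγ * (min (B-A) 1 / 2) ≤ Iv / (K:ℝ) := by
      have hcase : min (B-A) 1 / 2 ≤ t - A ∨ min (B-A) 1 / 2 ≤ B - t := by
        rcases le_or_gt (min (B-A) 1 / 2) (t - A) with h | h
        · exact Or.inl h
        · right; have h1 := htJ.1; have h2 := htJ.2; linarith
      rcases hcase with hca | hca
      · have hsub1 : Ioc (t - min (B-A) 1 / 2) t ⊆ Ioc A B :=
          Ioc_subset_Ioc (by linarith) htJ.2
        have hsub2 : Ioc (t - min (B-A) 1 / 2) t ⊆ Icc (-(M+1)) (M+1) := by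
          intro x hx
          have e1 := htM.1; have e2 := htM.2; have e3 := hx.1; have e4 := hx.2
          exact ⟨by simp only [mem_Ioc] at *; linarith, by linarith⟩
        have h1 : δγ * (min (B-A) 1 / 2)
            ≤ ∫ x in Ioc (t - min (B-A) 1 / 2) t, |deriv g x| := by
          have hb := setIntegral_ge_of_const_le (c := δγ)
            (f := fun t => |deriv g t|) measurableSet_Ioc
            (show volume (Ioc (t - min (B-A) 1 / 2) t) < ⊤ from measure_Ioc_lt_top).ne
            (fun x hx => hδγ x (hsub2 hx)) hγcont.integrableOn_Ioc
          rwa [Real.volume_real_Ioc_of_le (by linarith), show t - (t - min (B-A) 1 / 2) = min (B-A) 1 / 2 by ring,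
            smul_eq_mul, mul_comm] at hb
        have h2 : (∫ x in Ioc (t - min (B-A) 1 / 2) t, |deriv g x|)
            ≤ ∫ x in Ioc A B, |deriv g x| :=
          setIntegral_mono_set hγcont.integrableOn_Ioc
            (ae_of_all _ fun x => abs_nonneg _) hsub1.eventuallyLE
        rw [← hIK]; linarith
      · have hsub1 : Ioc t (t + min (B-A) 1 / 2) ⊆ Ioc A B :=
          Ioc_subset_Ioc htJ.1.le (by linarith)
        have hsub2 : Ioc t (t + min (B-A) 1 / 2) ⊆ Icc (-(M+1)) (M+1) := by
          intro x hx
          have e1 := htM.1; have e2 := htM.2; have e3 := hx.1; have e4 := hx.2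
          exact ⟨by linarith, by linarith⟩
        have h1 : δγ * (min (B-A) 1 / 2)
            ≤ ∫ x in Ioc t (t + min (B-A) 1 / 2), |deriv g x| := by
          have hb := setIntegral_ge_of_const_le (c := δγ)
            (f := fun t => |deriv g t|) measurableSet_Ioc
            (show volume (Ioc t (t + min (B-A) 1 / 2)) < ⊤ from measure_Ioc_lt_top).ne
            (fun x hx => hδγ x (hsub2 hx)) hγcont.integrableOn_Ioc
          rwa [Real.volume_real_Ioc_of_le (by linarith), show t + min (B-A) 1 / 2 - t = min (B-A) 1 / 2 by ring,
            smul_eq_mul, mul_comm] at hb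
        have h2 : (∫ x in Ioc t (t + min (B-A) 1 / 2), |deriv g x|)
            ≤ ∫ x in Ioc A B, |deriv g x| :=
          setIntegral_mono_set hγcont.integrableOn_Ioc
            (ae_of_all _ fun x => abs_nonneg _) hsub1.eventuallyLE
        rw [← hIK]; linarith
    have hKIv : 2 * Iv < (K:ℝ) * (δγ * η) :=
      (div_lt_iff₀ (by positivity)).mp hKbig
    have hIK'' : δγ * (min (B-A) 1 / 2) * (K:ℝ) ≤ Iv :=
      (le_div_iff₀ hK).mp hIK'
    have hlη : min (B-A) 1 < η := by
      have e : δγ * min (B-A) 1 * (K:ℝ) = 2 * (δγ * (min (B-A) 1 / 2) * (K:ℝ)) := by ring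
      have h1 : δγ * min (B-A) 1 * (K:ℝ) < (K:ℝ) * (δγ * η) := by linarith
      have h2 : (δγ * (K:ℝ)) * min (B-A) 1 < (δγ * (K:ℝ)) * η := by
        rw [show (δγ * (K:ℝ)) * min (B-A) 1 = δγ * min (B-A) 1 * (K:ℝ) by ring,
          show (δγ * (K:ℝ)) * η = (K:ℝ) * (δγ * η) by ring]
        exact h1
      exact lt_of_mul_lt_mul_left h2 (by positivity)
    have hΔ1 : B - A < 1 := by
      rcases min_lt_iff.mp (lt_of_lt_of_le hlη hη1) with h | h
      · exact h
      · exact absurd h (lt_irrefl _)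
    have hΔη : B - A ≤ η := by
      rw [min_eq_left hΔ1.le] at hlη; exact hlη.le
    have hsubC : Icc A B ⊆ Icc (-(M+1)) (M+1) := by
      intro x hx
      have e1 := htM.1; have e2 := htM.2; have e3 := htJ.1; have e4 := htJ.2
      exact ⟨by linarith [hx.1], by linarith [hx.2]⟩
    have hγosc : ∀ x ∈ Icc A B, abs (|deriv g x| - |deriv g m|) ≤ ε₀ := by
      intro x hx
      refine hγuc x (hsubC hx) m (hsubC hmI) ?_
      have : |x - m| ≤ B - A :=
        abs_le.mpr ⟨by linarith [hx.1, hmI.2], by linarith [hx.2, hmI.1]⟩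
      linarith
    have hfosc : ∀ x ∈ Icc A B, |f x - f m| ≤ ε₀ := by
      intro x hx
      refine hfuc x (hsubC hx) m (hsubC hmI) ?_
      have : |x - m| ≤ B - A :=
        abs_le.mpr ⟨by linarith [hx.1, hmI.2], by linarith [hx.2, hmI.1]⟩
      linarith
    have hδγm : δγ ≤ |deriv g m| := hδγ m (hsubC hmI)
    have hδfm : δf ≤ f m := hδf m (hsubC hmI)
    have hε'δγ : ε' * δγ ≤ δγ := mul_le_of_le_one_left hδγpos.le hε'1
    have hε'δf : ε' * δf ≤ δf := mul_le_of_le_one_left hδfpos.le hε'1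
    have hγlb : ε₀ ≤ |deriv g m| := by linarith
    have hcore := cell_core hg hne hf_cont hf_pos hAB hε₀ hγosc hfosc hγlb
    have hbpos : 0 < |deriv g m| - ε₀ := by linarith
    have hvpos : 0 < f m - ε₀ := by linarith
    -- bounds relating K, the cell length, γ m
    have hKlow : (|deriv g m| - ε₀) * (B - A) ≤ Iv / (K:ℝ) := by
      rw [← hIK]
      have hb := setIntegral_ge_of_const_le (c := |deriv g m| - ε₀)
        (f := fun t => |deriv g t|) measurableSet_Ioc
        (show volume (Ioc A B) < ⊤ from measure_Ioc_lt_top).ne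
        (fun x hx => by
          have h2 := abs_le.mp (hγosc x ⟨hx.1.le, hx.2⟩); linarith [h2.1])
        hγcont.integrableOn_Ioc
      rwa [Real.volume_real_Ioc_of_le (by linarith : A ≤ B), smul_eq_mul, mul_comm] at hb
    have hKhigh : Iv / (K:ℝ) ≤ (|deriv g m| + ε₀) * (B - A) := by
      rw [← hIK]
      have hb : (∫ t in Ioc A B, |deriv g t|)
          ≤ ∫ _t in Ioc A B, (|deriv g m| + ε₀) := by
        refine setIntegral_mono_on hγcont.integrableOn_Ioc
          (continuous_const.integrableOn_Ioc) measurableSet_Ioc ?_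
        intro x hx
        have h2 := abs_le.mp (hγosc x ⟨hx.1.le, hx.2⟩); linarith [h2.2]
      rwa [setIntegral_const, Real.volume_real_Ioc_of_le (by linarith : A ≤ B),
        smul_eq_mul,
        mul_comm] at hb
    have hflow : (f m - ε₀) * (B - A) ≤ ∫ x in Ioc A B, f x := by
      have hb := setIntegral_ge_of_const_le (c := f m - ε₀)
        (f := f) measurableSet_Ioc
        (show volume (Ioc A B) < ⊤ from measure_Ioc_lt_top).ne
        (fun x hx => by
          have h2 := abs_le.mp (hfosc x ⟨hx.1.le, hx.2⟩); linarith [h2.1])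
        hf_cont.integrableOn_Ioc
      rwa [Real.volume_real_Ioc_of_le (by linarith : A ≤ B), smul_eq_mul, mul_comm] at hb
    have hfhigh : (∫ x in Ioc A B, f x) ≤ (f m + ε₀) * (B - A) := by
      have hb : (∫ x in Ioc A B, f x) ≤ ∫ _x in Ioc A B, (f m + ε₀) := by
        refine setIntegral_mono_on hf_cont.integrableOn_Ioc
          (continuous_const.integrableOn_Ioc) measurableSet_Ioc ?_
        intro x hx
        have h2 := abs_le.mp (hfosc x ⟨hx.1.le, hx.2⟩); linarith [h2.2]
      rwa [setIntegral_const, Real.volume_real_Ioc_of_le (by linarith : A ≤ B),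
        smul_eq_mul,
        mul_comm] at hb
    -- ratio facts
    have hε'γm : ε' * δγ ≤ ε' * |deriv g m| := mul_le_mul_of_nonneg_left hδγm hε'.le
    have hε'fm : ε' * δf ≤ ε' * f m := mul_le_mul_of_nonneg_left hδfm hε'.le
    have hQ : ε' * ε₀ ≤ ε₀ := mul_le_of_le_one_left hε₀.le hε'1
    have hQ0 : 0 ≤ ε' * ε₀ := by positivity
    have r1 : |deriv g m| + ε₀ ≤ (1+ε') * (|deriv g m| - ε₀) := by
      have : (1+ε') * (|deriv g m| - ε₀)
          = |deriv g m| - ε₀ + ε' * |deriv g m| - ε' * ε₀ := by ring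
      linarith
    have r2 : f m + ε₀ ≤ (1+ε') * (f m - ε₀) := by
      have : (1+ε') * (f m - ε₀) = f m - ε₀ + ε' * f m - ε' * ε₀ := by ring
      linarith
    have r1' : (1-ε') * (|deriv g m| + ε₀) ≤ |deriv g m| - ε₀ := by
      have : (1-ε') * (|deriv g m| + ε₀)
          = |deriv g m| + ε₀ - ε' * |deriv g m| - ε' * ε₀ := by ring
      linarith
    have r2' : (1-ε') * (f m + ε₀) ≤ f m - ε₀ := by
      have : (1-ε') * (f m + ε₀) = f m + ε₀ - ε' * f m - ε' * ε₀ := by ring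
      linarith
    have hKlow' : (|deriv g m| - ε₀) * (B - A) * (K:ℝ) ≤ Iv := (le_div_iff₀ hK).mp hKlow
    have hKhigh' : Iv ≤ (|deriv g m| + ε₀) * (B - A) * (K:ℝ) := (div_le_iff₀ hK).mp hKhigh
    have s3 : ((|deriv g m| - ε₀) * (B - A) * (K:ℝ))^2 ≤ Iv^2 :=
      pow_le_pow_left₀ (mul_nonneg (mul_nonneg hbpos.le (by linarith)) hK.le) hKlow' 2
    have s3' : Iv^2 ≤ ((|deriv g m| + ε₀) * (B - A) * (K:ℝ))^2 :=
      pow_le_pow_left₀ hIpos.le hKhigh' 2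
    constructor
    · -- lower bound
      have hindle : (∫ x in Ioc A B, (Ioc (-M) M).indicator f x)
          ≤ ∫ x in Ioc A B, f x := by
        refine setIntegral_mono_on
          (hf_cont.integrableOn_Ioc.indicator measurableSet_Ioc)
          hf_cont.integrableOn_Ioc measurableSet_Ioc ?_
        intro x _
        by_cases hxs : x ∈ Ioc (-M) M
        · rw [indicator_of_mem hxs]
        · rw [indicator_of_notMem hxs]; exact (hf_pos x).le
      have k1' : ((1-ε') * (|deriv g m| + ε₀))^2 ≤ (|deriv g m| - ε₀)^2 :=
        pow_le_pow_left₀ (mul_nonneg (by linarith)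
          (by linarith [abs_nonneg (deriv g m)])) r1' 2
      have key' : (1-ε')^3 * ((|deriv g m| + ε₀)^2 * (f m + ε₀))
          ≤ (|deriv g m| - ε₀)^2 * (f m - ε₀) := by
        calc (1-ε')^3 * ((|deriv g m| + ε₀)^2 * (f m + ε₀))
            = ((1-ε') * (|deriv g m| + ε₀))^2 * ((1-ε') * (f m + ε₀)) := by ring
          _ ≤ (|deriv g m| - ε₀)^2 * (f m - ε₀) :=
              mul_le_mul k1' r2' (mul_nonneg (by linarith) (by linarith [hf_pos m]))
                (by positivity)
      calc (1-ε')^3 * (Iv^2/12) * (∫ x in Ioc A B, (Ioc (-M) M).indicator f x)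
          ≤ (1-ε')^3 * (Iv^2/12) * ((f m + ε₀) * (B - A)) := by
            refine mul_le_mul_of_nonneg_left ?_
              (mul_nonneg (pow_nonneg (by linarith) 3) (by positivity))
            exact le_trans hindle hfhigh
        _ ≤ (1-ε')^3 * ((((|deriv g m| + ε₀) * (B - A) * (K:ℝ))^2)/12)
              * ((f m + ε₀) * (B - A)) := by
            refine mul_le_mul_of_nonneg_right ?_
              (mul_nonneg (by linarith [hf_pos m]) (by linarith))
            refine mul_le_mul_of_nonneg_left ?_ (pow_nonneg (by linarith) 3)
            linarith [s3']
        _ = ((K:ℝ)^2 * ((B-A)^3/12))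
              * ((1-ε')^3 * ((|deriv g m| + ε₀)^2 * (f m + ε₀))) := by ring
        _ ≤ ((K:ℝ)^2 * ((B-A)^3/12))
              * ((|deriv g m| - ε₀)^2 * (f m - ε₀)) :=
            mul_le_mul_of_nonneg_left key'
              (mul_nonneg (by positivity)
                (div_nonneg (pow_nonneg (by linarith) 3) (by norm_num)))
        _ = (K:ℝ)^2 * (((|deriv g m| - ε₀)^2 * (f m - ε₀)) * ((B-A)^3/12)) := by ring
        _ ≤ (K:ℝ)^2 * ∫ x in Ioc A B, (g x - g m)^2 * f x :=
            mul_le_mul_of_nonneg_left hcore.1 (by positivity)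
    · -- upper bound
      have hind2 : (0:ℝ) ≤ ∫ x in Ioc A B, ((Ioc (-M) M)ᶜ).indicator f x := by
        refine setIntegral_nonneg measurableSet_Ioc fun x _ => ?_
        exact indicator_nonneg (fun y _ => (hf_pos y).le) x
      have k1 : (|deriv g m| + ε₀)^2 ≤ ((1+ε') * (|deriv g m| - ε₀))^2 :=
        pow_le_pow_left₀ (by linarith [abs_nonneg (deriv g m)]) r1 2
      have key : (|deriv g m| + ε₀)^2 * (f m + ε₀)
          ≤ (1+ε')^3 * ((|deriv g m| - ε₀)^2 * (f m - ε₀)) := by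
        calc (|deriv g m| + ε₀)^2 * (f m + ε₀)
            ≤ ((1+ε') * (|deriv g m| - ε₀))^2 * ((1+ε') * (f m - ε₀)) :=
              mul_le_mul k1 r2 (by linarith [hf_pos m]) (by positivity)
          _ = (1+ε')^3 * ((|deriv g m| - ε₀)^2 * (f m - ε₀)) := by ring
      have hmain : (K:ℝ)^2 * (∫ x in Ioc A B, (g x - g m)^2 * f x)
          ≤ (1+ε')^3 * (Iv^2/12) * (∫ x in Ioc A B, f x) := by
        calc (K:ℝ)^2 * (∫ x in Ioc A B, (g x - g m)^2 * f x)
            ≤ (K:ℝ)^2 * (((|deriv g m| + ε₀)^2 * (f m + ε₀)) * ((B-A)^3/12)) :=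
              mul_le_mul_of_nonneg_left hcore.2 (by positivity)
          _ ≤ (K:ℝ)^2 * (((1+ε')^3 * ((|deriv g m| - ε₀)^2 * (f m - ε₀))) * ((B-A)^3/12)) := by
              refine mul_le_mul_of_nonneg_left ?_ (by positivity)
              exact mul_le_mul_of_nonneg_right key
                (div_nonneg (pow_nonneg (by linarith) 3) (by norm_num))
          _ = ((1+ε')^3 * ((f m - ε₀) * (B-A) / 12))
                * (((|deriv g m| - ε₀) * (B-A) * (K:ℝ))^2) := by ring
          _ ≤ ((1+ε')^3 * ((f m - ε₀) * (B-A) / 12)) * Iv^2 :=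
              mul_le_mul_of_nonneg_left s3
                (mul_nonneg (by positivity)
                  (div_nonneg (mul_nonneg hvpos.le (by linarith)) (by norm_num)))
          _ = (1+ε')^3 * (Iv^2/12) * ((f m - ε₀) * (B-A)) := by ring
          _ ≤ (1+ε')^3 * (Iv^2/12) * (∫ x in Ioc A B, f x) :=
              mul_le_mul_of_nonneg_left hflow (by positivity)
      linarith [hmain, mul_nonneg (sq_nonneg Iv) hind2]
  · -- cell far from [-M, M]
    have hfar : ∀ x, x ∈ Ioc A B → x ∉ Ioc (-M) M := fun x hxJ hxS =>
      hmeet ⟨x, hxJ, ⟨hxS.1.le, hxS.2⟩⟩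
    constructor
    · have hzero : (∫ x in Ioc A B, (Ioc (-M) M).indicator f x) = 0 := by
        rw [setIntegral_congr_fun measurableSet_Ioc
          (fun x hx => indicator_of_notMem (hfar x hx) f : EqOn _ (fun _ => (0:ℝ)) _)]
        simp
      rw [hzero, mul_zero]
      exact mul_nonneg (by positivity) hcellnn
    · have heq : (∫ x in Ioc A B, ((Ioc (-M) M)ᶜ).indicator f x)
          = ∫ x in Ioc A B, f x := by
        refine setIntegral_congr_fun measurableSet_Ioc fun x hx => ?_
        exact indicator_of_mem (mem_compl (hfar x hx)) f
      rw [heq]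
      linarith [hU0, mul_nonneg (mul_nonneg (by positivity : (0:ℝ) ≤ (1+ε')^3)
        (by positivity : (0:ℝ) ≤ Iv^2/12)) hfJnn]

lemma aux_quartic {e : ℝ} (h0 : 0 ≤ e) (h1 : e ≤ 1) : (1:ℝ) - 4*e ≤ (1-e)^4 := by
  nlinarith [sq_nonneg e, sq_nonneg (1-e), sq_nonneg (e*(1-e))]

lemma aux_cubic {e : ℝ} (h0 : 0 ≤ e) (h1 : e ≤ 1) : (1+e)^3 ≤ 1 + 7*e := by
  nlinarith [sq_nonneg e]

set_option maxHeartbeats 2000000 in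
lemma granular_limit {p : ℕ → ℕ → ℝ}
    (hmono : StrictMono c) (hcc : ContDiff ℝ 1 c) (hrange : range c = Ioo (0:ℝ) 1)
    (hint : Integrable (fun x => |deriv g x|))
    (hpos : (0:ℝ) < ∫ x : ℝ, |deriv g x|)
    (hcderiv : ∀ x, deriv c x = |deriv g x| / ∫ t : ℝ, |deriv g t|)
    (hf_cont : Continuous f) (hf_pos : ∀ x, 0 < f x)
    (hf_prob : (∫ x : ℝ, f x) = 1)
    (hg : ContDiff ℝ 2 g) (hne : ∀ x, deriv g x ≠ 0)
    (hp : ∀ K : ℕ, 3 ≤ K → IsBoundaries c K (p K)) :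
    Tendsto (fun K : ℕ => ∑ k ∈ Finset.Icc 2 (K-1), (K:ℝ)^2 *
        ∫ x in Ioc (p K (k-1)) (p K k), (g x - g ((p K (k-1) + p K k)/2))^2 * f x)
      atTop (𝓝 ((∫ x : ℝ, |deriv g x|)^2 / 12)) := by
  have hIf : Integrable f := integrable_of_integral_one hf_prob
  set Iv := ∫ x : ℝ, |deriv g x| with hIvdef
  have hγcont : Continuous (fun t => |deriv g t|) := (gderiv_cont hg).abs
  rw [Metric.tendsto_atTop]
  intro ε hε
  -- choose the accuracy parameter ε'
  set ε' := min (ε / (2*Iv^2 + 1)) 1 with hε'def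
  have hε'pos : 0 < ε' := lt_min (by positivity) one_pos
  have hε'1 : ε' ≤ 1 := min_le_right _ _
  have hε'le : ε' * (2*Iv^2 + 1) ≤ ε := by
    have h1 : ε' ≤ ε / (2*Iv^2 + 1) := min_le_left _ _
    rw [← le_div_iff₀ (by positivity)]
    exact h1
  -- choose M
  have hsmono : Monotone (fun n : ℕ => Ioc (-(n:ℝ)) (n:ℝ)) := by
    intro a b hab
    exact Ioc_subset_Ioc (neg_le_neg (by exact_mod_cast hab)) (by exact_mod_cast hab)
  have hsuniv : (⋃ n : ℕ, Ioc (-(n:ℝ)) (n:ℝ)) = univ := by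
    ext x
    simp only [mem_iUnion, mem_univ, iff_true]
    obtain ⟨n, hn⟩ := exists_nat_gt |x|
    refine ⟨n, ?_, ?_⟩
    · linarith [neg_abs_le x, hn]
    · linarith [le_abs_self x, hn]
  have hMlim : Tendsto (fun n : ℕ => ∫ x in Ioc (-(n:ℝ)) (n:ℝ), f x) atTop (𝓝 1) := by
    have h := tendsto_setIntegral_of_monotone (fun n : ℕ => measurableSet_Ioc) hsmono
      (by rw [hsuniv]; exact hIf.integrableOn)
    rw [hsuniv, MeasureTheory.setIntegral_univ, hf_prob] at h
    exact h
  obtain ⟨Mn, hMn⟩ := (hMlim.eventually (eventually_ge_nhds (by linarith : 1 - ε' < 1))).exists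
  set M := (Mn : ℝ) with hMdef
  have hM0 : (0:ℝ) ≤ M := Nat.cast_nonneg _
  have hMS : 1 - ε' ≤ ∫ x in Ioc (-M) M, f x := hMn
  -- compact control on Icc (-(M+1)) (M+1)
  have hCne : (Icc (-(M+1)) (M+1)).Nonempty := nonempty_Icc.mpr (by linarith)
  obtain ⟨xγ, hxγ, hminγ⟩ := isCompact_Icc.exists_isMinOn hCne hγcont.continuousOn
  obtain ⟨xf, hxf, hminf⟩ := isCompact_Icc.exists_isMinOn hCne hf_cont.continuousOn
  set δγ := |deriv g xγ| with hδγdef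
  set δf := f xf with hδfdef
  have hδγpos : 0 < δγ := abs_pos.mpr (hne xγ)
  have hδfpos : 0 < δf := hf_pos xf
  have hδγ : ∀ x ∈ Icc (-(M+1)) (M+1), δγ ≤ |deriv g x| := fun x hx =>
    isMinOn_iff.mp hminγ x hx
  have hδf : ∀ x ∈ Icc (-(M+1)) (M+1), δf ≤ f x := fun x hx =>
    isMinOn_iff.mp hminf x hx
  -- uniform continuity moduli
  set ε₀ := (min δγ δf) * ε' / 3 with hε₀def
  have hε₀pos : 0 < ε₀ := by
    have : 0 < min δγ δf := lt_min hδγpos hδfpos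
    positivity
  have hε₀γ : 3 * ε₀ ≤ ε' * δγ := by
    have h3 : min δγ δf * ε' ≤ δγ * ε' :=
      mul_le_mul_of_nonneg_right (min_le_left _ _) hε'pos.le
    rw [hε₀def]
    linarith
  have hε₀f : 3 * ε₀ ≤ ε' * δf := by
    have h3 : min δγ δf * ε' ≤ δf * ε' :=
      mul_le_mul_of_nonneg_right (min_le_right _ _) hε'pos.le
    rw [hε₀def]
    linarith
  obtain ⟨ηγ, hηγpos, hηγ⟩ := (Metric.uniformContinuousOn_iff_le).mp
    (isCompact_Icc.uniformContinuousOn_of_continuous hγcont.continuousOn) ε₀ hε₀pos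
  obtain ⟨ηf, hηfpos, hηf⟩ := (Metric.uniformContinuousOn_iff_le).mp
    (isCompact_Icc.uniformContinuousOn_of_continuous hf_cont.continuousOn) ε₀ hε₀pos
  set η := min 1 (min ηγ ηf) with hηdef
  have hηpos : 0 < η := lt_min one_pos (lt_min hηγpos hηfpos)
  have hη1 : η ≤ 1 := min_le_left _ _
  have hγuc : ∀ x ∈ Icc (-(M+1)) (M+1), ∀ y ∈ Icc (-(M+1)) (M+1),
      |x - y| ≤ η → abs (|deriv g x| - |deriv g y|) ≤ ε₀ := by
    intro x hx y hy hxy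
    have := hηγ x hx y hy (by
      rw [Real.dist_eq]
      exact le_trans hxy (le_trans (min_le_right _ _) (min_le_left _ _)))
    rwa [Real.dist_eq] at this
  have hfuc : ∀ x ∈ Icc (-(M+1)) (M+1), ∀ y ∈ Icc (-(M+1)) (M+1),
      |x - y| ≤ η → |f x - f y| ≤ ε₀ := by
    intro x hx y hy hxy
    have := hηf x hx y hy (by
      rw [Real.dist_eq]
      exact le_trans hxy (le_trans (min_le_right _ _) (min_le_right _ _)))
    rwa [Real.dist_eq] at this
  -- eventual conditions on K
  have hev : ∀ᶠ K : ℕ in atTop, 3 ≤ K ∧ p K 1 ≤ -M ∧ M ≤ p K (K-1)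
      ∧ 2 * Iv / (δγ * η) < (K:ℝ) := by
    refine ((eventually_ge_atTop 3).and (((p_bot hmono hrange hp).eventually
      (eventually_le_atBot (-M))).and (((p_top hmono hrange hp).eventually
      (eventually_ge_atTop M)).and (tendsto_natCast_atTop_atTop.eventually
      (eventually_gt_atTop (2 * Iv / (δγ * η))))))).mono ?_
    intro K hK
    exact ⟨hK.1, hK.2.1, hK.2.2.1, hK.2.2.2⟩
  rw [eventually_atTop] at hev
  obtain ⟨N, hN⟩ := hev
  refine ⟨N, fun K hKN => ?_⟩
  obtain ⟨hK3, hpbot, hptop, hKbig⟩ := hN K hKN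
  have hK0 : (0:ℝ) < (K:ℝ) := by positivity
  have hKm1 : 2 ≤ K - 1 := by omega
  have hpmono := p_mono hmono (hp K hK3)
  -- instantiate the cell bounds on every cell
  have hcells : ∀ k ∈ Finset.Icc 2 (K-1),
      ((1-ε')^3 * (Iv^2/12) *
        (∫ x in Ioc (p K (k-1)) (p K k), (Ioc (-M) M).indicator f x)
      ≤ (K:ℝ)^2 * ∫ x in Ioc (p K (k-1)) (p K k),
          (g x - g ((p K (k-1) + p K k)/2))^2 * f x)
      ∧ (K:ℝ)^2 * (∫ x in Ioc (p K (k-1)) (p K k),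
          (g x - g ((p K (k-1) + p K k)/2))^2 * f x)
      ≤ (1+ε')^3 * (Iv^2/12) * (∫ x in Ioc (p K (k-1)) (p K k), f x)
        + Iv^2 * ∫ x in Ioc (p K (k-1)) (p K k), ((Ioc (-M) M)ᶜ).indicator f x := by
    intro k hk
    simp only [Finset.mem_Icc] at hk
    have hAB : p K (k-1) < p K k := p_lt hmono (hp K hK3) (by omega) (by omega) hk.2
    have hcell : c (p K k) - c (p K (k-1)) = 1/(K:ℝ) := by
      rw [hp K hK3 k (by omega) hk.2, hp K hK3 (k-1) (by omega) (by omega),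
        div_sub_div_same]
      congr 1
      push_cast [Nat.cast_sub (show 1 ≤ k by omega)]
      ring
    exact cell_bounds hg hne hf_cont hf_pos hcc hcderiv hpos hAB hK0 hcell
      hηpos hη1 hε'pos hε'1 hε₀pos hδγpos hδfpos hδγ hδf hγuc hfuc hε₀γ hε₀f hKbig
  -- sums of the indicator integrals
  have hsum_f : ∑ k ∈ Finset.Icc 2 (K-1), ∫ x in Ioc (p K (k-1)) (p K k), f x
      = ∫ x in Ioc (p K 1) (p K (K-1)), f x :=
    sum_integral_Ioc f hIf (p K) (K-1) hKm1 hpmono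
  have hsum_indc : ∑ k ∈ Finset.Icc 2 (K-1),
      ∫ x in Ioc (p K (k-1)) (p K k), ((Ioc (-M) M)ᶜ).indicator f x
      = ∫ x in Ioc (p K 1) (p K (K-1)), ((Ioc (-M) M)ᶜ).indicator f x :=
    sum_integral_Ioc _ (hIf.indicator measurableSet_Ioc.compl) (p K) (K-1) hKm1 hpmono
  have hsum_ind : ∑ k ∈ Finset.Icc 2 (K-1),
      ∫ x in Ioc (p K (k-1)) (p K k), (Ioc (-M) M).indicator f x
      = ∫ x in Ioc (p K 1) (p K (K-1)), (Ioc (-M) M).indicator f x :=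
    sum_integral_Ioc _ (hIf.indicator measurableSet_Ioc) (p K) (K-1) hKm1 hpmono
  -- bounds on those integrals
  have hf_le_one : (∫ x in Ioc (p K 1) (p K (K-1)), f x) ≤ 1 := by
    rw [← hf_prob]
    exact setIntegral_le_integral hIf (ae_of_all _ fun x => (hf_pos x).le)
  have hindc_le : (∫ x in Ioc (p K 1) (p K (K-1)), ((Ioc (-M) M)ᶜ).indicator f x) ≤ ε' := by
    have h1 : (∫ x in Ioc (p K 1) (p K (K-1)), ((Ioc (-M) M)ᶜ).indicator f x)
        ≤ ∫ x : ℝ, ((Ioc (-M) M)ᶜ).indicator f x :=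
      setIntegral_le_integral (hIf.indicator measurableSet_Ioc.compl)
        (ae_of_all _ fun x => indicator_nonneg (fun y _ => (hf_pos y).le) x)
    have h2 : (∫ x : ℝ, ((Ioc (-M) M)ᶜ).indicator f x)
        = 1 - ∫ x in Ioc (-M) M, f x := by
      rw [MeasureTheory.integral_indicator measurableSet_Ioc.compl]
      have h3 := integral_add_compl (measurableSet_Ioc (a := -M) (b := M)) hIf
      rw [hf_prob] at h3
      linarith
    rw [h2] at h1
    linarith
  have hind_ge : 1 - ε' ≤ ∫ x in Ioc (p K 1) (p K (K-1)), (Ioc (-M) M).indicator f x := by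
    have hsub : Ioc (-M) M ⊆ Ioc (p K 1) (p K (K-1)) :=
      Ioc_subset_Ioc hpbot hptop
    rw [setIntegral_indicator measurableSet_Ioc,
      inter_eq_self_of_subset_right hsub]
    exact hMS
  have hind_nonneg : (0:ℝ) ≤ ∫ x in Ioc (p K 1) (p K (K-1)), (Ioc (-M) M).indicator f x :=
    setIntegral_nonneg measurableSet_Ioc fun x _ =>
      indicator_nonneg (fun y _ => (hf_pos y).le) x
  have hf_nonneg : (0:ℝ) ≤ ∫ x in Ioc (p K 1) (p K (K-1)), f x :=
    setIntegral_nonneg measurableSet_Ioc fun x _ => (hf_pos x).le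
  -- upper bound on the sum
  set G := ∑ k ∈ Finset.Icc 2 (K-1), (K:ℝ)^2 *
      ∫ x in Ioc (p K (k-1)) (p K k), (g x - g ((p K (k-1) + p K k)/2))^2 * f x with hGdef
  have hUB : G ≤ (1+ε')^3 * (Iv^2/12) + Iv^2 * ε' := by
    have h1 : G ≤ ∑ k ∈ Finset.Icc 2 (K-1),
        ((1+ε')^3 * (Iv^2/12) * (∫ x in Ioc (p K (k-1)) (p K k), f x)
          + Iv^2 * ∫ x in Ioc (p K (k-1)) (p K k), ((Ioc (-M) M)ᶜ).indicator f x) :=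
      Finset.sum_le_sum fun k hk => (hcells k hk).2
    rw [Finset.sum_add_distrib, ← Finset.mul_sum, ← Finset.mul_sum,
      hsum_f, hsum_indc] at h1
    have h2 : (1+ε')^3 * (Iv^2/12) * (∫ x in Ioc (p K 1) (p K (K-1)), f x)
        ≤ (1+ε')^3 * (Iv^2/12) * 1 :=
      mul_le_mul_of_nonneg_left hf_le_one (by positivity)
    have h3 : Iv^2 * (∫ x in Ioc (p K 1) (p K (K-1)), ((Ioc (-M) M)ᶜ).indicator f x)
        ≤ Iv^2 * ε' := mul_le_mul_of_nonneg_left hindc_le (sq_nonneg _)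
    rw [mul_one] at h2
    linarith
  have hLB : (1-ε')^3 * (Iv^2/12) * (1-ε') ≤ G := by
    have h1 : ∑ k ∈ Finset.Icc 2 (K-1),
        (1-ε')^3 * (Iv^2/12) *
          (∫ x in Ioc (p K (k-1)) (p K k), (Ioc (-M) M).indicator f x) ≤ G :=
      Finset.sum_le_sum fun k hk => (hcells k hk).1
    rw [← Finset.mul_sum, hsum_ind] at h1
    have h2 : (1-ε')^3 * (Iv^2/12) * (1-ε')
        ≤ (1-ε')^3 * (Iv^2/12) *
          (∫ x in Ioc (p K 1) (p K (K-1)), (Ioc (-M) M).indicator f x) :=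
      mul_le_mul_of_nonneg_left hind_ge
        (mul_nonneg (pow_nonneg (by linarith) 3) (by positivity))
    linarith
  -- conclude
  rw [Real.dist_eq, abs_lt]
  have hIvpos : (0:ℝ) < Iv := hpos
  constructor
  · -- -(ε) < G - Iv^2/12
    have hexp : (1-ε')^3 * (Iv^2/12) * (1-ε') = (Iv^2/12) * (1-ε')^4 := by ring
    rw [hexp] at hLB
    have h4 : (1:ℝ) - 4*ε' ≤ (1-ε')^4 := aux_quartic hε'pos.le hε'1
    have h5 : (Iv^2/12) * (1 - 4*ε') ≤ (Iv^2/12) * (1-ε')^4 :=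
      mul_le_mul_of_nonneg_left h4 (by positivity)
    have h6 : Iv^2/12 - G ≤ (Iv^2/12) * (4*ε') := by linarith
    have h7 : (Iv^2/12) * (4*ε') ≤ ε' * (2*Iv^2 + 1) := by
      have h8 : (0:ℝ) ≤ Iv^2 * ε' := by positivity
      have h9 : (0:ℝ) ≤ ε' := hε'pos.le
      linarith
    linarith
  · -- G - Iv^2/12 < ε
    have h4 : (1+ε')^3 ≤ 1 + 7*ε' := aux_cubic hε'pos.le hε'1
    have h5 : (1+ε')^3 * (Iv^2/12) ≤ (1 + 7*ε') * (Iv^2/12) :=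
      mul_le_mul_of_nonneg_right h4 (by positivity)
    have h6 : G - Iv^2/12 ≤ 7*ε' * (Iv^2/12) + Iv^2 * ε' := by linarith
    have h7 : 7*ε' * (Iv^2/12) + Iv^2 * ε' ≤ ε' * (2*Iv^2 + 1) := by
      have h8 : (0:ℝ) ≤ Iv^2 * ε' := by positivity
      have h9 : (0:ℝ) ≤ ε' := hε'pos.le
      linarith
    linarith

lemma overload_right {p : ℕ → ℕ → ℝ}
    (hmono : StrictMono c) (hcc : ContDiff ℝ 1 c) (hrange : range c = Ioo (0:ℝ) 1)
    (hint : Integrable (fun x => |deriv g x|))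
    (hcderiv : ∀ x, deriv c x = |deriv g x| / ∫ t : ℝ, |deriv g t|)
    (hUF4p : Tendsto (fun y =>
        (∫ x in Set.Ioi y, (g x - g y) ^ 2 * f x) /
          (∫ x in Set.Ioi y, deriv c x) ^ 2) atTop (𝓝 0))
    (hp : ∀ K : ℕ, 3 ≤ K → IsBoundaries c K (p K)) :
    Tendsto (fun K : ℕ => (K:ℝ)^2 *
      ∫ x in Ioi (p K (K-1)), (g x - g (p K (K-1)))^2 * f x) atTop (𝓝 0) := by
  have hintc : Integrable (deriv c) := derivc_int hint hcderiv
  have hratio := hUF4p.comp (p_top hmono hrange hp)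
  refine Tendsto.congr' ?_ hratio
  filter_upwards [eventually_ge_atTop 3] with K hK3
  have hK0 : ((K:ℝ)) ≠ 0 := by positivity
  have h1 : ∫ x in Ioi (p K (K-1)), deriv c x = 1/(K:ℝ) := by
    rw [int_Ioi_derivc hcc hmono hrange hintc]
    exact c_p_last (hp K hK3) hK3
  simp only [Function.comp_apply, h1]
  rw [div_pow, one_pow, div_div_eq_mul_div, div_one, mul_comm]

lemma overload_left {p : ℕ → ℕ → ℝ}
    (hmono : StrictMono c) (hcc : ContDiff ℝ 1 c) (hrange : range c = Ioo (0:ℝ) 1)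
    (hint : Integrable (fun x => |deriv g x|))
    (hcderiv : ∀ x, deriv c x = |deriv g x| / ∫ t : ℝ, |deriv g t|)
    (hUF4m : Tendsto (fun y =>
        (∫ x in Set.Iio y, (g x - g y) ^ 2 * f x) /
          (∫ x in Set.Iio y, deriv c x) ^ 2) atBot (𝓝 0))
    (hp : ∀ K : ℕ, 3 ≤ K → IsBoundaries c K (p K)) :
    Tendsto (fun K : ℕ => (K:ℝ)^2 *
      ∫ x in Iic (p K 1), (g x - g (p K 1))^2 * f x) atTop (𝓝 0) := by
  have hintc : Integrable (deriv c) := derivc_int hint hcderiv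
  have hratio := hUF4m.comp (p_bot hmono hrange hp)
  refine Tendsto.congr' ?_ hratio
  filter_upwards [eventually_ge_atTop 3] with K hK3
  have hK0 : ((K:ℝ)) ≠ 0 := by positivity
  have h1 : ∫ x in Iio (p K 1), deriv c x = 1/(K:ℝ) := by
    rw [int_Iio_derivc hcc hmono hrange hintc]
    exact c_p_one (hp K hK3) hK3
  have h2 : ∫ x in Iio (p K 1), (g x - g (p K 1))^2 * f x
      = ∫ x in Iic (p K 1), (g x - g (p K 1))^2 * f x :=
    setIntegral_congr_set Iio_ae_eq_Iic
  simp only [Function.comp_apply, h1, h2]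
  rw [div_pow, one_pow, div_div_eq_mul_div, div_one, mul_comm]

end Stmt11

/-- Entropy-constrained optimal univariate functional distortion: the point density
`λ*(x) = γ(x)/∫γ` (with `γ = |g'|`) gives `lim K² D(K) = (1/12)(∫ γ)²`. -/
theorem stmt11 (f g c : ℝ → ℝ) (Cu : ℝ)
    (p : ℕ → ℕ → ℝ) (Q : ℕ → ℝ → ℝ)
    (hc : IsCompressor c)
    -- λ* is well defined
    (hint : Integrable (fun x => |deriv g x|))
    (hpos : (0 : ℝ) < ∫ x : ℝ, |deriv g x|)
    -- the compressor has point density λ* = γ / ∫ γ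
    (hcderiv : ∀ x, deriv c x = |deriv g x| / ∫ t : ℝ, |deriv g t|)
    -- UF1′
    (hf_cont : Continuous f) (hf_pos : ∀ x, 0 < f x)
    (hf_prob : (∫ x : ℝ, f x) = 1)
    -- UF2′
    (hg : ContDiff ℝ 2 g)
    (hg' : ∀ x, |deriv g x| ≤ Cu) (hg'' : ∀ x, |deriv (deriv g) x| ≤ Cu)
    -- UF3′ for λ*
    (hUF3 : ∀ m : ℕ, m ≤ 2 →
      Integrable (fun x => f x * |deriv g x| ^ (2 - m) / (deriv c x) ^ (2 + m)))
    -- UF4′ for λ*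
    (hUF4p : Tendsto (fun y =>
        (∫ x in Set.Ioi y, (g x - g y) ^ 2 * f x) /
          (∫ x in Set.Ioi y, deriv c x) ^ 2) atTop (𝓝 0))
    (hUF4m : Tendsto (fun y =>
        (∫ x in Set.Iio y, (g x - g y) ^ 2 * f x) /
          (∫ x in Set.Iio y, deriv c x) ^ 2) atBot (𝓝 0))
    -- the family of compander quantizers for c
    (hp : ∀ K : ℕ, 3 ≤ K → IsBoundaries c K (p K))
    (hQ : ∀ K : ℕ, 3 ≤ K → IsCompanderQuantizer K (p K) (Q K)) :
    Tendsto (fun K : ℕ =>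
        (K : ℝ) ^ 2 * ∫ x : ℝ, (g x - g (Q K x)) ^ 2 * f x)
      atTop
      (𝓝 ((1 / 12) * (∫ x : ℝ, |deriv g x|) ^ 2)) := by
  obtain ⟨hmono, hcc, hrange, -⟩ := hc
  have hne : ∀ x, deriv g x ≠ 0 :=
    Stmt11.gderiv_ne_zero hg hg' hg'' hpos hcderiv hf_cont hf_pos (hUF3 2 le_rfl)
  have hIf : Integrable f := Stmt11.integrable_of_integral_one hf_prob
  have hL := Stmt11.overload_left hmono hcc hrange hint hcderiv hUF4m hp
  have hR := Stmt11.overload_right hmono hcc hrange hint hcderiv hUF4p hp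
  have hG := Stmt11.granular_limit hmono hcc hrange hint hpos hcderiv hf_cont hf_pos
    hf_prob hg hne hp
  have hsum := (hL.add hG).add hR
  rw [show (0:ℝ) + (∫ x : ℝ, |deriv g x|)^2/12 + 0
      = (1/12) * (∫ x : ℝ, |deriv g x|)^2 by ring] at hsum
  refine Tendsto.congr' ?_ hsum
  filter_upwards [eventually_ge_atTop 3] with K hK3
  have hsplit := Stmt11.main_split hK3 hmono (hp K hK3) (hQ K hK3) hg hne hint hIf
    hf_cont hf_pos
  rw [hsplit, mul_add, mul_add, Finset.mul_sum]
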